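/- arXiv:2004.00744 — 8 statements merged into one kernel-verified Lean document; each statement's English description precedes it below -/
import Mathlib

section
/- Let G be a regular pattern graph on a pattern set 𝓡 and let p and p' be two joint pmfs, both satisfying marginal positivity, whose selection odds models both factorize with respect to G. If p and p' induce the same observed-data distribution, i.e. p_r(ℓ, r) = p'_r(ℓ, r) for every ℓ and every r ∈ 𝓡, then p = p'; in particular the propensity score π(ℓ) = p(ℓ, 1_d)/p(ℓ, 𝓡) is identified from the observed-data distribution. -/
open Finset

noncomputable section

/-- Response patterns: binary vectors of length `d`, ordered pointwise (`false < true`). -/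
abbrev Pat (d : ℕ) := Fin d → Bool

/-- The all-true (fully observed) pattern `1_d`. -/
def allOnes (d : ℕ) : Pat d := fun _ => true

variable {d : ℕ}


instance (r s : Pat d) : Decidable (r ≤ s) :=
  decidable_of_iff (∀ j, r j ≤ s j) (by simp [Pi.le_def])

instance (r s : Pat d) : Decidable (r < s) :=
  decidable_of_iff (r ≤ s ∧ ¬ s ≤ r) lt_iff_le_not_ge.symm

/-- Two full-data values have the same observed part under pattern `r`. -/
def agree {X : Fin d → Type*} (r : Pat d) (ℓ ℓ' : ∀ j, X j) : Prop :=
  ∀ j, r j = true → ℓ j = ℓ' j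

instance {X : Fin d → Type*} [∀ j, DecidableEq (X j)] (r : Pat d) (ℓ ℓ' : ∀ j, X j) :
    Decidable (agree r ℓ ℓ') := by
  unfold agree; infer_instance

variable {X : Fin d → Type*} [∀ j, Fintype (X j)] [∀ j, DecidableEq (X j)]

/-- `p(ℓ, A) = Σ_{s ∈ A} p(ℓ, s)`. -/
def jointA (p : (∀ j, X j) → Pat d → ℝ) (ℓ : ∀ j, X j) (A : Finset (Pat d)) : ℝ :=
  ∑ s ∈ A, p ℓ s

/-- `p_r(ℓ, s) = Σ_{ℓ' ~_r ℓ} p(ℓ', s)` : observed-data mass under pattern `r`. -/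
def obsP (p : (∀ j, X j) → Pat d → ℝ) (r : Pat d) (ℓ : ∀ j, X j) (s : Pat d) : ℝ :=
  ∑ ℓ' ∈ univ.filter (fun ℓ' => agree r ℓ ℓ'), p ℓ' s

/-- `p_r(ℓ, A) = Σ_{s ∈ A} p_r(ℓ, s)`. -/
def obsPA (p : (∀ j, X j) → Pat d → ℝ) (r : Pat d) (ℓ : ∀ j, X j) (A : Finset (Pat d)) : ℝ :=
  ∑ s ∈ A, obsP p r ℓ s

/-- `p` is a joint pmf on (full data) × (pattern set `𝓡`): nonnegative with total sum 1. -/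
def IsJointPMF (𝓡 : Finset (Pat d)) (p : (∀ j, X j) → Pat d → ℝ) : Prop :=
  (∀ ℓ, ∀ r ∈ 𝓡, 0 ≤ p ℓ r) ∧ (∑ ℓ : ∀ j, X j, ∑ r ∈ 𝓡, p ℓ r) = 1

/-- Marginal positivity: `p_r(ℓ, r) > 0` for every `ℓ` and every `r ∈ 𝓡`. -/
def MargPos (𝓡 : Finset (Pat d)) (p : (∀ j, X j) → Pat d → ℝ) : Prop :=
  ∀ ℓ, ∀ r ∈ 𝓡, 0 < obsP p r ℓ r

/-- Full positivity: `p(ℓ, r) > 0` for every `ℓ` and every `r ∈ 𝓡`. -/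
def FullPos (𝓡 : Finset (Pat d)) (p : (∀ j, X j) → Pat d → ℝ) : Prop :=
  ∀ ℓ, ∀ r ∈ 𝓡, 0 < p ℓ r

/-- Selection odds `O_r(ℓ) = p_r(ℓ, r) / p_r(ℓ, PA(r))`. -/
def odds (p : (∀ j, X j) → Pat d → ℝ) (PA : Pat d → Finset (Pat d)) (r : Pat d)
    (ℓ : ∀ j, X j) : ℝ :=
  obsP p r ℓ r / obsPA p r ℓ (PA r)

/-- A regular pattern graph on `𝓡`: `1_d` is a source, and every other pattern in `𝓡`
has a nonempty parent set inside `𝓡` consisting of strictly larger patterns. -/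
def IsRegularGraph (𝓡 : Finset (Pat d)) (PA : Pat d → Finset (Pat d)) : Prop :=
  PA (allOnes d) = ∅ ∧
    ∀ r ∈ 𝓡, r ≠ allOnes d → (PA r).Nonempty ∧ PA r ⊆ 𝓡 ∧ ∀ s ∈ PA r, r < s

/-- The selection odds model of `p` factorizes with respect to the pattern graph. -/
def SelOddsFactorizes (𝓡 : Finset (Pat d)) (PA : Pat d → Finset (Pat d))
    (p : (∀ j, X j) → Pat d → ℝ) : Prop :=
  ∀ r ∈ 𝓡, r ≠ allOnes d → ∀ ℓ, p ℓ r = jointA p ℓ (PA r) * odds p PA r ℓ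

/-- The pattern mixture model of `p` factorizes with respect to the pattern graph. -/
def PMMFactorizes (𝓡 : Finset (Pat d)) (PA : Pat d → Finset (Pat d))
    (p : (∀ j, X j) → Pat d → ℝ) : Prop :=
  ∀ r ∈ 𝓡, r ≠ allOnes d → ∀ ℓ,
    p ℓ r * obsPA p r ℓ (PA r) = jointA p ℓ (PA r) * obsP p r ℓ r

/-- A path from `u` to `v` in the pattern graph: a nonempty sequence
`u = r_0, r_1, …, r_m = v` of patterns in `𝓡` with `r_i ∈ PA(r_{i+1})`. -/
def IsPath (𝓡 : Finset (Pat d)) (PA : Pat d → Finset (Pat d)) (u v : Pat d)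
    (Ξ : List (Pat d)) : Prop :=
  Ξ ≠ [] ∧ Ξ.head? = some u ∧ Ξ.getLast? = some v ∧ (∀ q ∈ Ξ, q ∈ 𝓡) ∧
    Ξ.Chain' (fun a b => a ∈ PA b)

/-- **Identifiability under selection-odds factorization.** Two joint pmfs with the same
observed-data distribution that both factorize w.r.t. the same regular pattern graph are
equal; in particular the propensity score is identified. -/
theorem selection_odds_identification [∀ j, Nonempty (X j)]
    (𝓡 : Finset (Pat d)) (h𝓡 : allOnes d ∈ 𝓡)
    (PA : Pat d → Finset (Pat d)) (hG : IsRegularGraph 𝓡 PA)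
    (p p' : (∀ j, X j) → Pat d → ℝ)
    (hpmf : IsJointPMF 𝓡 p) (hpmf' : IsJointPMF 𝓡 p')
    (hpos : MargPos 𝓡 p) (hpos' : MargPos 𝓡 p')
    (hfact : SelOddsFactorizes 𝓡 PA p) (hfact' : SelOddsFactorizes 𝓡 PA p')
    (hobs : ∀ r ∈ 𝓡, ∀ ℓ, obsP p r ℓ r = obsP p' r ℓ r) :
    (∀ ℓ, ∀ r ∈ 𝓡, p ℓ r = p' ℓ r) ∧
    (∀ ℓ, p ℓ (allOnes d) / jointA p ℓ 𝓡 = p' ℓ (allOnes d) / jointA p' ℓ 𝓡) := by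
  classical
  have key : ∀ r : Pat d, r ∈ 𝓡 → ∀ ℓ, p ℓ r = p' ℓ r := by
    have wf : WellFounded ((· > ·) : Pat d → Pat d → Prop) := wellFounded_gt
    intro r
    induction r using wf.induction with
    | _ r IH =>
      intro hr ℓ
      by_cases h1 : r = allOnes d
      · subst h1
        have hfil : ∀ ℓ : ∀ j, X j,
            univ.filter (fun ℓ' => agree (allOnes d) ℓ ℓ') = {ℓ} := by
          intro ℓ; ext ℓ'
          simp [agree, allOnes, funext_iff, eq_comm]
        have e : ∀ q : (∀ j, X j) → Pat d → ℝ,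
            obsP q (allOnes d) ℓ (allOnes d) = q ℓ (allOnes d) := by
          intro q; rw [obsP, hfil, Finset.sum_singleton]
        rw [← e p, ← e p', hobs _ h𝓡]
      · obtain ⟨hne, hsub, hlt⟩ := hG.2 r hr h1
        have hO : odds p PA r ℓ = odds p' PA r ℓ := by
          unfold odds
          rw [hobs r hr ℓ]
          congr 1
          refine Finset.sum_congr rfl fun s hs => ?_
          exact Finset.sum_congr rfl fun ℓ' _ => IH s (hlt s hs) (hsub hs) ℓ'
        rw [hfact r hr h1 ℓ, hfact' r hr h1 ℓ, hO]
        congr 1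
        exact Finset.sum_congr rfl fun s hs => IH s (hlt s hs) (hsub hs) ℓ
  refine ⟨fun ℓ r hr => key r hr ℓ, fun ℓ => ?_⟩
  have h1 : p ℓ (allOnes d) = p' ℓ (allOnes d) := key _ h𝓡 ℓ
  have h2 : jointA p ℓ 𝓡 = jointA p' ℓ 𝓡 :=
    Finset.sum_congr rfl fun s hs => key s hs ℓ
  rw [h1, h2]
end
end

section
/- Let G be a regular pattern graph on a pattern set 𝓡 and let p be a joint pmf satisfying marginal positivity whose selection odds model factorizes with respect to G. Then for every ℓ: (i) Σ_{r ∈ 𝓡} Σ_{Ξ ∈ Π_r} π(ℓ) · ∏_{s ∈ Ξ, s ≠ 1_d} O_s(ℓ) = 1; (ii) for every r ∈ 𝓡, p(ℓ, r)/p(ℓ, 𝓡) = Σ_{Ξ ∈ Π_r} π(ℓ) · ∏_{s ∈ Ξ, s ≠ 1_d} O_s(ℓ); equivalently, Q_r(ℓ) = Σ_{Ξ ∈ Π_r} ∏_{s ∈ Ξ, s ≠ 1_d} O_s(ℓ) for every r ∈ 𝓡 and π(ℓ) = 1/(Σ_{r ∈ 𝓡} Σ_{Ξ ∈ Π_r}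 ∏_{s ∈ Ξ, s ≠ 1_d} O_s(ℓ)). -/
open Finset

noncomputable section

variable {d : ℕ}


variable {X : Fin d → Type*} [∀ j, Fintype (X j)] [∀ j, DecidableEq (X j)]

lemma path_ones {𝓡 : Finset (Pat d)} {PA : Pat d → Finset (Pat d)}
    (h𝓡 : allOnes d ∈ 𝓡) (hPA : PA (allOnes d) = ∅) (Ξ : List (Pat d)) :
    IsPath 𝓡 PA (allOnes d) (allOnes d) Ξ ↔ Ξ = [allOnes d] := by
  constructor
  · rintro ⟨hne, hhead, hlast, hmem, hchain⟩
    rcases List.eq_nil_or_concat Ξ with h | ⟨L, b, rfl⟩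
    · exact absurd h hne
    rw [List.concat_eq_append] at *
    rw [List.getLast?_concat] at hlast
    obtain rfl : b = allOnes d := by simpa using hlast
    rcases List.eq_nil_or_concat L with h | ⟨L', c, rfl⟩
    · simp [h]
    · exfalso
      rw [List.concat_eq_append] at *
      rw [List.Chain', List.isChain_append] at hchain
      have := hchain.2.2 c (by simp) (allOnes d) (by simp)
      simp [hPA] at this
  · rintro rfl
    exact ⟨by simp, by simp, by simp, by simpa using h𝓡, by simp [List.Chain']⟩

lemma path_split {𝓡 : Finset (Pat d)} {PA : Pat d → Finset (Pat d)}
    {r : Pat d} (hr : r ∈ 𝓡) (hne : r ≠ allOnes d) (Ξ : List (Pat d)) :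
    IsPath 𝓡 PA (allOnes d) r Ξ ↔
      ∃ s ∈ PA r, ∃ Ξ', IsPath 𝓡 PA (allOnes d) s Ξ' ∧ Ξ = Ξ' ++ [r] := by
  constructor
  · rintro ⟨hne0, hhead, hlast, hmem, hchain⟩
    rcases List.eq_nil_or_concat Ξ with h | ⟨L, b, rfl⟩
    · exact absurd h hne0
    rw [List.concat_eq_append] at *
    rw [List.getLast?_concat] at hlast
    obtain rfl : b = r := by simpa using hlast
    have hL : L ≠ [] := by
      rintro rfl
      exact hne (by simpa using hhead)
    rw [List.Chain', List.isChain_append] at hchain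
    refine ⟨L.getLast hL, ?_, L, ⟨hL, ?_, List.getLast?_eq_getLast hL, ?_, hchain.1⟩, rfl⟩
    · exact hchain.2.2 _ (List.getLast?_eq_getLast hL) b (by simp)
    · rw [List.head?_append] at hhead
      rcases h : L.head? with _ | a
      · exact absurd (List.head?_eq_none_iff.mp h) hL
      · rw [h] at hhead; simpa [h] using hhead
    · intro q hq; exact hmem q (by simp [hq])
  · rintro ⟨s, hs, Ξ', ⟨hne0, hhead, hlast, hmem, hchain⟩, rfl⟩
    refine ⟨by simp, ?_, List.getLast?_concat, ?_, ?_⟩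
    · rw [List.head?_append]
      rcases h : Ξ'.head? with _ | a
      · exact absurd (List.head?_eq_none_iff.mp h) hne0
      · rw [h] at hhead; simpa using hhead
    · intro q hq
      rcases List.mem_append.mp hq with h | h
      · exact hmem q h
      · simpa using (List.mem_singleton.mp h) ▸ hr
    · rw [List.Chain', List.isChain_append]
      refine ⟨hchain, by simp, ?_⟩
      intro x hx y hy
      rw [hlast] at hx
      simp at hx hy
      subst hx; subst hy; exact hs

lemma Q_formula (𝓡 : Finset (Pat d)) (h𝓡 : allOnes d ∈ 𝓡)
    (PA : Pat d → Finset (Pat d)) (hG : IsRegularGraph 𝓡 PA)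
    (p : (∀ j, X j) → Pat d → ℝ) (hfact : SelOddsFactorizes 𝓡 PA p)
    (hp1 : ∀ ℓ, p ℓ (allOnes d) ≠ 0)
    (Paths : Pat d → Finset (List (Pat d)))
    (hPaths : ∀ r, ∀ Ξ, Ξ ∈ Paths r ↔ IsPath 𝓡 PA (allOnes d) r Ξ) :
    ∀ r ∈ 𝓡, ∀ ℓ, p ℓ r / p ℓ (allOnes d)
      = ∑ Ξ ∈ Paths r,
          (Ξ.map fun s => if s = allOnes d then (1:ℝ) else odds p PA s ℓ).prod := by
  have wf : WellFounded ((· > ·) : Pat d → Pat d → Prop) :=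
    (inferInstance : WellFoundedGT (Pat d)).wf
  intro r
  induction r using wf.induction with
  | _ r IH =>
  intro hr ℓ
  by_cases hr1 : r = allOnes d
  · subst hr1
    have hP1 : Paths (allOnes d) = {[allOnes d]} := by
      ext Ξ
      rw [hPaths, path_ones h𝓡 hG.1, Finset.mem_singleton]
    rw [hP1, Finset.sum_singleton, div_self (hp1 ℓ)]
    simp
  · obtain ⟨hPAne, hPAsub, hPAgt⟩ := hG.2 r hr hr1
    have hbi : Paths r = (PA r).biUnion (fun s => (Paths s).image (fun Ξ => Ξ ++ [r])) := by
      ext Ξ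
      rw [hPaths, path_split hr hr1, Finset.mem_biUnion]
      constructor
      · rintro ⟨s, hs, Ξ', hp', rfl⟩
        exact ⟨s, hs, Finset.mem_image.mpr ⟨Ξ', (hPaths s Ξ').mpr hp', rfl⟩⟩
      · rintro ⟨s, hs, h⟩
        obtain ⟨Ξ', hΞ', rfl⟩ := Finset.mem_image.mp h
        exact ⟨s, hs, Ξ', (hPaths s Ξ').mp hΞ', rfl⟩
    have hdisj : (↑(PA r) : Set (Pat d)).PairwiseDisjoint
        (fun s => (Paths s).image (fun Ξ => Ξ ++ [r])) := by
      intro s₁ h₁ s₂ h₂ hne12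
      simp only [Function.onFun]
      rw [Finset.disjoint_left]
      intro Ξ hΞ1 hΞ2
      obtain ⟨Ξ₁, hΞ₁, rfl⟩ := Finset.mem_image.mp hΞ1
      obtain ⟨Ξ₂, hΞ₂, heq⟩ := Finset.mem_image.mp hΞ2
      obtain rfl : Ξ₂ = Ξ₁ := List.append_left_injective [r] heq
      have e1 := ((hPaths s₁ Ξ₂).mp hΞ₁).2.2.1
      have e2 := ((hPaths s₂ Ξ₂).mp hΞ₂).2.2.1
      rw [e1] at e2
      have : s₁ = s₂ := by simpa using e2
      exact hne12 this
    have hinj : ∀ s : Pat d, Set.InjOn (fun Ξ : List (Pat d) => Ξ ++ [r]) (Paths s) := by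
      intro s Ξ₁ _ Ξ₂ _ h
      exact List.append_left_injective [r] h
    rw [hbi, Finset.sum_biUnion hdisj]
    have hterm : ∀ Ξ : List (Pat d),
        (((Ξ ++ [r]).map fun s => if s = allOnes d then (1:ℝ) else odds p PA s ℓ).prod)
          = ((Ξ.map fun s => if s = allOnes d then (1:ℝ) else odds p PA s ℓ).prod)
            * odds p PA r ℓ := by
      intro Ξ
      rw [List.map_append, List.prod_append]
      simp [hr1]
    calc p ℓ r / p ℓ (allOnes d)
        = (∑ s ∈ PA r, p ℓ s) * odds p PA r ℓ / p ℓ (allOnes d) := by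
          rw [hfact r hr hr1 ℓ]; rfl
      _ = ∑ s ∈ PA r, (p ℓ s / p ℓ (allOnes d)) * odds p PA r ℓ := by
          rw [Finset.sum_mul, Finset.sum_div]
          exact Finset.sum_congr rfl fun s _ => by ring
      _ = ∑ s ∈ PA r, (∑ Ξ ∈ Paths s,
            (Ξ.map fun t => if t = allOnes d then (1:ℝ) else odds p PA t ℓ).prod)
              * odds p PA r ℓ := by
          refine Finset.sum_congr rfl fun s hs => ?_
          rw [IH s (hPAgt s hs) (hPAsub hs) ℓ]
      _ = ∑ s ∈ PA r, ∑ Ξ ∈ (Paths s).image (fun Ξ => Ξ ++ [r]),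
            (Ξ.map fun t => if t = allOnes d then (1:ℝ) else odds p PA t ℓ).prod := by
          refine Finset.sum_congr rfl fun s hs => ?_
          rw [Finset.sum_image (fun a ha b hb h => hinj s ha hb h), Finset.sum_mul]
          exact Finset.sum_congr rfl fun Ξ _ => (hterm Ξ).symm

/-- **Proposition (path decomposition).** Under selection-odds factorization w.r.t. a
regular pattern graph, the path-specific scores `κ(Ξ|ℓ) = π(ℓ)·∏_{s∈Ξ, s≠1_d} O_s(ℓ)` sum
to one, `P(R = r|ℓ)` is the sum of the scores of the paths ending at `r`, and equivalently
`Q_r(ℓ) = Σ_{Ξ∈Π_r} ∏_{s∈Ξ, s≠1_d} O_s(ℓ)` and `π(ℓ)` is one over the total sum. -/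
theorem path_decomposition [∀ j, Nonempty (X j)]
    (𝓡 : Finset (Pat d)) (h𝓡 : allOnes d ∈ 𝓡)
    (PA : Pat d → Finset (Pat d)) (hG : IsRegularGraph 𝓡 PA)
    (p : (∀ j, X j) → Pat d → ℝ)
    (hpmf : IsJointPMF 𝓡 p) (hpos : MargPos 𝓡 p)
    (hfact : SelOddsFactorizes 𝓡 PA p)
    (Paths : Pat d → Finset (List (Pat d)))
    (hPaths : ∀ r, ∀ Ξ, Ξ ∈ Paths r ↔ IsPath 𝓡 PA (allOnes d) r Ξ) :
    (∀ ℓ, ∑ r ∈ 𝓡, ∑ Ξ ∈ Paths r,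
        (p ℓ (allOnes d) / jointA p ℓ 𝓡) *
          (Ξ.map fun s => if s = allOnes d then (1:ℝ) else odds p PA s ℓ).prod = 1) ∧
    (∀ r ∈ 𝓡, ∀ ℓ, p ℓ r / jointA p ℓ 𝓡
        = ∑ Ξ ∈ Paths r, (p ℓ (allOnes d) / jointA p ℓ 𝓡) *
            (Ξ.map fun s => if s = allOnes d then (1:ℝ) else odds p PA s ℓ).prod) ∧
    (∀ r ∈ 𝓡, ∀ ℓ, p ℓ r / p ℓ (allOnes d)
        = ∑ Ξ ∈ Paths r,
            (Ξ.map fun s => if s = allOnes d then (1:ℝ) else odds p PA s ℓ).prod) ∧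
    (∀ ℓ, p ℓ (allOnes d) / jointA p ℓ 𝓡
        = 1 / ∑ r ∈ 𝓡, ∑ Ξ ∈ Paths r,
            (Ξ.map fun s => if s = allOnes d then (1:ℝ) else odds p PA s ℓ).prod) := by
  have hp1 : ∀ ℓ, 0 < p ℓ (allOnes d) := by
    intro ℓ
    have h := hpos ℓ _ h𝓡
    have hfil : (univ.filter (fun ℓ' => agree (allOnes d) ℓ ℓ')) = {ℓ} := by
      ext ℓ'
      simp [agree, allOnes, funext_iff, eq_comm]
    rw [obsP, hfil, Finset.sum_singleton] at h
    exact h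
  have hp1ne : ∀ ℓ, p ℓ (allOnes d) ≠ 0 := fun ℓ => (hp1 ℓ).ne'
  have hA : ∀ ℓ, 0 < jointA p ℓ 𝓡 := by
    intro ℓ
    exact lt_of_lt_of_le (hp1 ℓ)
      (Finset.single_le_sum (fun s hs => hpmf.1 ℓ s hs) h𝓡)
  have hAne : ∀ ℓ, jointA p ℓ 𝓡 ≠ 0 := fun ℓ => (hA ℓ).ne'
  have Qf := Q_formula 𝓡 h𝓡 PA hG p hfact hp1ne Paths hPaths
  have hQsum : ∀ ℓ, ∑ r ∈ 𝓡, ∑ Ξ ∈ Paths r,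
      (Ξ.map fun s => if s = allOnes d then (1:ℝ) else odds p PA s ℓ).prod
        = jointA p ℓ 𝓡 / p ℓ (allOnes d) := by
    intro ℓ
    rw [jointA, Finset.sum_div]
    exact Finset.sum_congr rfl fun r hr => (Qf r hr ℓ).symm
  refine ⟨?_, ?_, fun r hr ℓ => Qf r hr ℓ, ?_⟩
  · intro ℓ
    have : ∀ r ∈ 𝓡, ∑ Ξ ∈ Paths r,
        (p ℓ (allOnes d) / jointA p ℓ 𝓡) *
          (Ξ.map fun s => if s = allOnes d then (1:ℝ) else odds p PA s ℓ).prod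
        = (p ℓ (allOnes d) / jointA p ℓ 𝓡) * (p ℓ r / p ℓ (allOnes d)) := by
      intro r hr
      rw [← Finset.mul_sum, ← Qf r hr ℓ]
    rw [Finset.sum_congr rfl this]
    have : ∀ r ∈ 𝓡, (p ℓ (allOnes d) / jointA p ℓ 𝓡) * (p ℓ r / p ℓ (allOnes d))
        = p ℓ r / jointA p ℓ 𝓡 := by
      intro r _
      rw [div_mul_div_comm, mul_comm (p ℓ (allOnes d)) (p ℓ r),
        mul_div_mul_right _ _ (hp1ne ℓ)]
    rw [Finset.sum_congr rfl this, ← Finset.sum_div]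
    exact div_self (hAne ℓ)
  · intro r hr ℓ
    rw [← Finset.mul_sum, ← Qf r hr ℓ, div_mul_div_comm,
      mul_comm (p ℓ (allOnes d)) (p ℓ r), mul_div_mul_right _ _ (hp1ne ℓ)]
  · intro ℓ
    rw [hQsum ℓ, one_div_div]
end
end

section
/- Let G be a regular pattern graph on a pattern set 𝓡 and let p and p' be two joint pmfs, both satisfying marginal positivity, whose pattern mixture models both factorize with respect to G. If p and p' induce the same observed-data distribution, i.e. p_r(ℓ, r) = p'_r(ℓ, r) for every ℓ and every r ∈ 𝓡, then p = p' (the full-data distribution is nonparametrically identified by the pattern-graph restriction). -/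
open Finset

noncomputable section

variable {d : ℕ}


variable {X : Fin d → Type*} [∀ j, Fintype (X j)] [∀ j, DecidableEq (X j)]

/-- **Theorem 2 (nonparametric identification).** Two joint pmfs with the same
observed-data distribution whose pattern mixture models both factorize w.r.t. the same
regular pattern graph are equal: the full-data distribution is identified. -/
theorem pattern_mixture_identification [∀ j, Nonempty (X j)]
    (𝓡 : Finset (Pat d)) (h𝓡 : allOnes d ∈ 𝓡)
    (PA : Pat d → Finset (Pat d)) (hG : IsRegularGraph 𝓡 PA)
    (p p' : (∀ j, X j) → Pat d → ℝ)
    (hpmf : IsJointPMF 𝓡 p) (hpmf' : IsJointPMF 𝓡 p')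
    (hpos : MargPos 𝓡 p) (hpos' : MargPos 𝓡 p')
    (hfact : PMMFactorizes 𝓡 PA p) (hfact' : PMMFactorizes 𝓡 PA p')
    (hobs : ∀ r ∈ 𝓡, ∀ ℓ, obsP p r ℓ r = obsP p' r ℓ r) :
    ∀ ℓ, ∀ r ∈ 𝓡, p ℓ r = p' ℓ r := by
  -- base case helper: for allOnes, obsP collapses to p itself
  have hbase : ∀ (q : (∀ j, X j) → Pat d → ℝ) (ℓ : ∀ j, X j),
      obsP q (allOnes d) ℓ (allOnes d) = q ℓ (allOnes d) := by
    intro q ℓ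
    unfold obsP
    have hfil : univ.filter (fun ℓ' => agree (allOnes d) ℓ ℓ') = {ℓ} := by
      ext ℓ'
      simp only [mem_filter, mem_univ, true_and, mem_singleton]
      unfold agree allOnes
      constructor
      · intro h; funext j; exact (h j rfl).symm
      · intro h j _; rw [h]
    rw [hfil, Finset.sum_singleton]
  -- card of true-set
  set cnt : Pat d → ℕ := fun r => (univ.filter fun j => r j = true).card with hcnt
  have hcnt_le : ∀ r : Pat d, cnt r ≤ d := by
    intro r
    calc cnt r ≤ (univ : Finset (Fin d)).card := Finset.card_le_card (filter_subset _ _)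
    _ = d := Finset.card_univ.trans (Fintype.card_fin d)
  have hcnt_lt : ∀ {a b : Pat d}, a < b → cnt a < cnt b := by
    intro a b hab
    obtain ⟨hle, hne⟩ := lt_iff_le_and_ne.mp hab
    apply Finset.card_lt_card
    rw [Finset.ssubset_iff_subset_ne]
    constructor
    · intro j hj
      simp only [mem_filter, mem_univ, true_and] at hj ⊢
      have := hle j
      rw [hj] at this
      cases h2 : b j
      · rw [h2] at this; exact absurd this (show (false : Bool) < true from Bool.false_lt_true).not_ge
      · rfl
    · intro hcontra
      apply hne
      funext j
      have := hle j
      by_cases hb : b j = true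
      · by_cases ha : a j = true
        · rw [ha, hb]
        · exfalso
          have : j ∈ univ.filter fun i => b i = true := by simp [hb]
          rw [← hcontra] at this
          simp only [mem_filter] at this
          exact ha this.2
      · cases haj : a j
        · simp at hb; rw [hb]
        · exact absurd (by rw [haj] at this; exact this) (by simp [hb])
  have hcnt_all : ∀ r : Pat d, cnt r = d → r = allOnes d := by
    intro r hrd
    have huniv : univ.filter (fun j => r j = true) = univ := by
      apply Finset.eq_univ_of_card
      exact hrd.trans (Fintype.card_fin d).symm
    funext j
    have hj : j ∈ univ.filter fun i => r i = true := by rw [huniv]; exact mem_univ j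
    simpa [allOnes] using (mem_filter.mp hj).2
  -- key induction
  have key : ∀ n (r : Pat d), d - cnt r ≤ n → r ∈ 𝓡 → ∀ ℓ, p ℓ r = p' ℓ r := by
    intro n
    induction n with
    | zero =>
      intro r hle hr ℓ
      have : r = allOnes d := hcnt_all r (le_antisymm (hcnt_le r) (Nat.le_of_sub_eq_zero (Nat.le_zero.mp hle)))
      subst this
      have := hobs _ hr ℓ
      rwa [hbase, hbase] at this
    | succ n ih =>
      intro r hle hr ℓ
      by_cases hall : r = allOnes d
      · subst hall
        have := hobs _ hr ℓ
        rwa [hbase, hbase] at this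
      · obtain ⟨hne, hsub, hlt⟩ := hG.2 r hr hall
        -- parents are strictly above, hence covered by ih
        have ihpar : ∀ s ∈ PA r, ∀ ℓ'', p ℓ'' s = p' ℓ'' s := by
          intro s hs ℓ''
          apply ih s _ (hsub hs)
          have h1 : cnt r < cnt s := hcnt_lt (hlt s hs)
          omega
        -- equalities of the three factors
        have hjA : jointA p ℓ (PA r) = jointA p' ℓ (PA r) := by
          unfold jointA
          exact Finset.sum_congr rfl fun s hs => ihpar s hs ℓ
        have hoPA : obsPA p r ℓ (PA r) = obsPA p' r ℓ (PA r) := by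
          unfold obsPA obsP
          refine Finset.sum_congr rfl fun s hs => ?_
          exact Finset.sum_congr rfl fun ℓ' _ => ihpar s hs ℓ'
        have hoP : obsP p r ℓ r = obsP p' r ℓ r := hobs r hr ℓ
        -- positivity of obsPA p r ℓ (PA r)
        have hposPA : 0 < obsPA p r ℓ (PA r) := by
          unfold obsPA
          have hterm : ∀ s ∈ PA r, 0 < obsP p r ℓ s := by
            intro s hs
            have hsR : s ∈ 𝓡 := hsub hs
            have hrs : r ≤ s := le_of_lt (hlt s hs)
            have hsubfil : univ.filter (fun ℓ' => agree s ℓ ℓ')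
                ⊆ univ.filter (fun ℓ' => agree r ℓ ℓ') := by
              intro ℓ' hℓ'
              simp only [mem_filter, mem_univ, true_and] at hℓ' ⊢
              intro j hj
              apply hℓ' j
              have := hrs j
              rw [hj] at this
              cases h2 : s j
              · rw [h2] at this; exact absurd this (show (false : Bool) < true from Bool.false_lt_true).not_ge
              · rfl
            have h1 : obsP p s ℓ s ≤ obsP p r ℓ s := by
              unfold obsP
              apply Finset.sum_le_sum_of_subset_of_nonneg hsubfil
              intro ℓ' _ _
              exact hpmf.1 ℓ' s hsR
            exact lt_of_lt_of_le (hpos ℓ s hsR) h1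
          exact Finset.sum_pos hterm hne
        -- conclude via the factorization equations
        have e1 := hfact r hr hall ℓ
        have e2 := hfact' r hr hall ℓ
        rw [← hoPA, ← hjA, ← hoP] at e2
        rw [← e1] at e2
        exact (mul_right_cancel₀ (ne_of_gt hposPA) e2).symm
  intro ℓ r hr
  exact key d r (Nat.sub_le _ _) hr ℓ
end
end

section
/- Let G be a regular pattern graph on a pattern set 𝓡 and let p be a joint pmf satisfying marginal positivity. Then the following two statements are equivalent: (i) the selection odds model of p factorizes with respect to G, i.e. p(ℓ, r) = p(ℓ, PA(r)) · O_r(ℓ) for every r ∈ 𝓡 with r ≠ 1_d and every ℓ; (ii) the pattern mixture model of p factorizes with respect to G, i.e. p(ℓ, r) · p_r(ℓ, PA(r)) = p(ℓ, PA(r)) · p_r(ℓ, r) for every r ∈ 𝓡 with r ≠ 1_d and every ℓ. -/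
open Finset

noncomputable section

variable {d : ℕ}


variable {X : Fin d → Type*} [∀ j, Fintype (X j)] [∀ j, DecidableEq (X j)]

/-- **Theorem 3 (equivalence).** For a regular pattern graph and a joint pmf with marginal
positivity, the selection odds model factorizes w.r.t. `G` if and only if the pattern
mixture model factorizes w.r.t. `G`. -/
theorem selection_odds_iff_pattern_mixture [∀ j, Nonempty (X j)]
    (𝓡 : Finset (Pat d)) (h𝓡 : allOnes d ∈ 𝓡)
    (PA : Pat d → Finset (Pat d)) (hG : IsRegularGraph 𝓡 PA)
    (p : (∀ j, X j) → Pat d → ℝ)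
    (hpmf : IsJointPMF 𝓡 p) (hpos : MargPos 𝓡 p) :
    SelOddsFactorizes 𝓡 PA p ↔ PMMFactorizes 𝓡 PA p := by
  have hnn : ∀ ℓ, ∀ r ∈ 𝓡, 0 ≤ p ℓ r := hpmf.1
  -- key positivity: obsPA p r ℓ (PA r) > 0
  have key : ∀ r ∈ 𝓡, r ≠ allOnes d → ∀ ℓ, 0 < obsPA p r ℓ (PA r) := by
    intro r hr hne ℓ
    obtain ⟨⟨s, hs⟩, hsub, hlt⟩ := hG.2 r hr hne
    have hs𝓡 : s ∈ 𝓡 := hsub hs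
    have hobs_nonneg : ∀ t ∈ PA r, 0 ≤ obsP p r ℓ t := by
      intro t ht
      exact Finset.sum_nonneg fun ℓ' _ => hnn ℓ' t (hsub ht)
    have hpos_s : 0 < obsP p r ℓ s := by
      have hle : obsP p s ℓ s ≤ obsP p r ℓ s := by
        apply Finset.sum_le_sum_of_subset_of_nonneg
        · intro ℓ' hℓ'
          simp only [Finset.mem_filter, Finset.mem_univ, true_and] at *
          intro j hj
          apply hℓ' j
          have := (hlt s hs).le j
          rw [hj] at this
          exact le_antisymm (Bool.le_true _) this
        · intro ℓ' _ _; exact hnn ℓ' s hs𝓡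
      exact lt_of_lt_of_le (hpos ℓ s hs𝓡) hle
    calc (0:ℝ) < obsP p r ℓ s := hpos_s
      _ ≤ obsPA p r ℓ (PA r) := Finset.single_le_sum hobs_nonneg hs
  constructor
  · intro h r hr hne ℓ
    have hO := h r hr hne ℓ
    have hpos' := key r hr hne ℓ
    rw [hO, odds]
    field_simp
  · intro h r hr hne ℓ
    have hP := h r hr hne ℓ
    have hpos' := key r hr hne ℓ
    rw [odds]
    field_simp
    linarith [hP]
end
end

section
/- Let G be a regular pattern graph on a pattern set 𝓡 and let p be a joint pmf satisfying marginal positivity whose selection odds model factorizes with respect to G. Fix θ : ((j : Fin d) → X_j) → ℝ, a pattern r ∈ 𝓡 with r ≠ 1_d, and a path Ξ ∈ Π_r. Suppose given working models O†_s and μ†_s for each s ∈ Ξ with s ≠ 1_d, each a real-valued function of ℓ depending only on the coordinates observed under s, such that for every such s at least one of the following holds: O†_s = O_s (the true selection odds) or μ†_s = μ_{Ξ,s} (the true regression function). Then the multiply-robust functional is unbiased along the path: Σ_{ℓ, ρ} 𝓛†_Ξ(ℓ, ρ) · p(ℓ, ρ) = θ_Ξ. -/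
open Finset

noncomputable section

variable {d : ℕ}


variable {X : Fin d → Type*} [∀ j, Fintype (X j)] [∀ j, DecidableEq (X j)]

section Helpers

lemma agree_refl (r : Pat d) {X : Fin d → Type*} (ℓ : ∀ j, X j) : agree r ℓ ℓ :=
  fun _ _ => rfl

lemma agree_symm {X : Fin d → Type*} {r : Pat d} {ℓ ℓ' : ∀ j, X j}
    (h : agree r ℓ ℓ') : agree r ℓ' ℓ := fun j hj => (h j hj).symm

lemma agree_trans {X : Fin d → Type*} {r : Pat d} {ℓ ℓ' ℓ'' : ∀ j, X j}
    (h : agree r ℓ ℓ') (h' : agree r ℓ' ℓ'') : agree r ℓ ℓ'' :=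
  fun j hj => (h j hj).trans (h' j hj)

lemma agree_mono {X : Fin d → Type*} {s τ : Pat d} (hst : s ≤ τ) {ℓ ℓ' : ∀ j, X j}
    (h : agree τ ℓ ℓ') : agree s ℓ ℓ' := by
  intro j hj
  exact h j (by have := hst j; rw [hj] at this; exact Bool.eq_true_of_true_le this)

lemma le_allOnes (s : Pat d) : s ≤ allOnes d := fun j => by simp [allOnes]

variable {X : Fin d → Type*} [∀ j, Fintype (X j)] [∀ j, DecidableEq (X j)]

lemma filter_agree_eq {r : Pat d} {ℓ ℓ' : ∀ j, X j} (h : agree r ℓ ℓ') :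
    univ.filter (fun ℓ'' => agree r ℓ ℓ'') = univ.filter (fun ℓ'' => agree r ℓ' ℓ'') := by
  ext x
  simp only [mem_filter, mem_univ, true_and]
  exact ⟨fun hx => agree_trans (agree_symm h) hx, fun hx => agree_trans h hx⟩

lemma obsP_congr (p : (∀ j, X j) → Pat d → ℝ) {r : Pat d} {ℓ ℓ' : ∀ j, X j}
    (h : agree r ℓ ℓ') (s : Pat d) : obsP p r ℓ s = obsP p r ℓ' s := by
  unfold obsP; rw [filter_agree_eq h]

lemma obsPA_congr (p : (∀ j, X j) → Pat d → ℝ) {r : Pat d} {ℓ ℓ' : ∀ j, X j}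
    (h : agree r ℓ ℓ') (A : Finset (Pat d)) : obsPA p r ℓ A = obsPA p r ℓ' A := by
  unfold obsPA; exact Finset.sum_congr rfl fun s _ => obsP_congr p h s

lemma odds_congr (p : (∀ j, X j) → Pat d → ℝ) (PA : Pat d → Finset (Pat d)) {r : Pat d}
    {ℓ ℓ' : ∀ j, X j} (h : agree r ℓ ℓ') : odds p PA r ℓ = odds p PA r ℓ' := by
  unfold odds; rw [obsP_congr p h, obsPA_congr p h]

lemma sum_agree_swap (r : Pat d) (h : (∀ j, X j) → (∀ j, X j) → ℝ) :
    ∑ ℓ : ∀ j, X j, ∑ ℓ' ∈ univ.filter (fun ℓ' => agree r ℓ ℓ'), h ℓ ℓ'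
      = ∑ ℓ' : ∀ j, X j, ∑ ℓ ∈ univ.filter (fun ℓ => agree r ℓ' ℓ), h ℓ ℓ' := by
  simp only [Finset.sum_filter]
  rw [Finset.sum_comm]
  refine Finset.sum_congr rfl fun ℓ' _ => Finset.sum_congr rfl fun ℓ _ => ?_
  by_cases hag : agree r ℓ ℓ'
  · rw [if_pos hag, if_pos (agree_symm hag)]
  · rw [if_neg hag, if_neg (fun h' => hag (agree_symm h'))]

lemma sum_filter_jointA (p : (∀ j, X j) → Pat d → ℝ) (r : Pat d) (ℓ' : ∀ j, X j)
    (A : Finset (Pat d)) :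
    ∑ ℓ ∈ univ.filter (fun ℓ => agree r ℓ' ℓ), jointA p ℓ A = obsPA p r ℓ' A := by
  unfold jointA obsPA obsP
  rw [Finset.sum_comm]

lemma key_swap (p : (∀ j, X j) → Pat d → ℝ) (r : Pat d) (A : Finset (Pat d))
    (F g : (∀ j, X j) → ℝ)
    (hF : ∀ ℓ ℓ', agree r ℓ ℓ' → F ℓ = F ℓ')
    (hD : ∀ ℓ, 0 < obsPA p r ℓ A) :
    ∑ ℓ : ∀ j, X j,
        (∑ ℓ' ∈ univ.filter (fun ℓ' => agree r ℓ ℓ'), g ℓ') / obsPA p r ℓ A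
          * (F ℓ * jointA p ℓ A)
      = ∑ ℓ : ∀ j, X j, g ℓ * F ℓ := by
  have h1 : ∀ ℓ : ∀ j, X j,
      (∑ ℓ' ∈ univ.filter (fun ℓ' => agree r ℓ ℓ'), g ℓ') / obsPA p r ℓ A
        * (F ℓ * jointA p ℓ A)
      = ∑ ℓ' ∈ univ.filter (fun ℓ' => agree r ℓ ℓ'),
          g ℓ' * (F ℓ / obsPA p r ℓ A * jointA p ℓ A) := by
    intro ℓ
    rw [Finset.sum_div, Finset.sum_mul]
    refine Finset.sum_congr rfl fun ℓ' _ => by ring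
  rw [Finset.sum_congr rfl fun ℓ _ => h1 ℓ, sum_agree_swap]
  refine Finset.sum_congr rfl fun ℓ' _ => ?_
  have h2 : ∀ ℓ ∈ univ.filter (fun ℓ => agree r ℓ' ℓ),
      g ℓ' * (F ℓ / obsPA p r ℓ A * jointA p ℓ A)
        = g ℓ' * (F ℓ' / obsPA p r ℓ' A) * jointA p ℓ A := by
    intro ℓ hℓ
    simp only [mem_filter, mem_univ, true_and] at hℓ
    rw [hF ℓ ℓ' (agree_symm hℓ), obsPA_congr p (agree_symm hℓ)]
    ring
  rw [Finset.sum_congr rfl h2, ← Finset.mul_sum, sum_filter_jointA, mul_assoc,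
    div_mul_cancel₀ _ (hD ℓ').ne']

end Helpers
section Helpers2

lemma list_sum_finset_sum {α β : Type*} (s : Finset β) (l : List α) (f : α → β → ℝ) :
    ∑ x ∈ s, (l.map fun a => f a x).sum = (l.map fun a => ∑ x ∈ s, f a x).sum := by
  induction l with
  | nil => simp
  | cons a l ih => simp [Finset.sum_add_distrib, ih]

lemma list_sum_map_mul_right {α : Type*} (l : List α) (f : α → ℝ) (c : ℝ) :
    (l.map f).sum * c = (l.map fun a => f a * c).sum := by
  induction l with
  | nil => simp
  | cons a l ih => simp [add_mul, ih]

lemma list_sum_map_mul_left {α : Type*} (l : List α) (f : α → ℝ) (c : ℝ) :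
    (l.map fun a => c * f a).sum = c * (l.map f).sum := by
  induction l with
  | nil => simp
  | cons a l ih => simp [mul_add, ih]

variable {X : Fin d → Type*} [∀ j, Fintype (X j)] [∀ j, DecidableEq (X j)]

lemma obsP_mono (p : (∀ j, X j) → Pat d → ℝ) (𝓡 : Finset (Pat d))
    (hnn : ∀ ℓ, ∀ q ∈ 𝓡, 0 ≤ p ℓ q) {r s : Pat d} (hrs : r ≤ s) (hs : s ∈ 𝓡)
    (ℓ : ∀ j, X j) : obsP p s ℓ s ≤ obsP p r ℓ s := by
  unfold obsP
  refine Finset.sum_le_sum_of_subset_of_nonneg ?_ fun ℓ' _ _ => hnn ℓ' s hs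
  intro ℓ' hℓ'
  simp only [mem_filter, mem_univ, true_and] at hℓ' ⊢
  exact agree_mono hrs hℓ'

lemma obsPA_pos (p : (∀ j, X j) → Pat d → ℝ) (𝓡 : Finset (Pat d))
    (PA : Pat d → Finset (Pat d)) (hG : IsRegularGraph 𝓡 PA)
    (hnn : ∀ ℓ, ∀ q ∈ 𝓡, 0 ≤ p ℓ q) (hpos : MargPos 𝓡 p)
    {r : Pat d} (hr : r ∈ 𝓡) (hr1 : r ≠ allOnes d) (ℓ : ∀ j, X j) :
    0 < obsPA p r ℓ (PA r) := by
  obtain ⟨hne, hsub, hlt⟩ := hG.2 r hr hr1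
  refine Finset.sum_pos (fun s hs => ?_) hne
  exact lt_of_lt_of_le (hpos ℓ s (hsub hs)) (obsP_mono p 𝓡 hnn (hlt s hs).le (hsub hs) ℓ)

lemma chain_lt (𝓡 : Finset (Pat d)) (PA : Pat d → Finset (Pat d))
    (hG : IsRegularGraph 𝓡 PA) :
    ∀ L : List (Pat d), (∀ q ∈ L, q ∈ 𝓡) → L.Chain' (fun a b => a ∈ PA b) →
      L.Chain' (fun a b => b < a)
  | [] => fun _ _ => List.isChain_nil
  | [x] => fun _ _ => List.isChain_singleton x
  | x :: y :: L => fun hm hc => by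
      simp only [List.Chain', List.isChain_cons_cons] at hc ⊢
      have hy : y ∈ 𝓡 := hm y (by simp)
      have hy1 : y ≠ allOnes d := by
        intro h
        rw [h, hG.1] at hc
        exact absurd hc.1 (Finset.notMem_empty x)
      exact ⟨(hG.2 y hy hy1).2.2 x hc.1,
        chain_lt 𝓡 PA hG (y :: L) (fun q hq => hm q (List.mem_cons_of_mem x hq)) hc.2⟩

lemma telescope (a b : Pat d → ℝ) :
    ∀ L : List (Pat d), L.Pairwise (fun x y => y < x) →
      (L.map fun s =>
          ((L.map fun τ => if s < τ then a τ else 1).prod) * (a s - b s) *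
            ((L.map fun w => if w < s then b w else 1).prod)).sum
        = (L.map a).prod - (L.map b).prod := by
  intro L
  induction L with
  | nil => simp
  | cons x L ih =>
    intro hpw
    rw [List.pairwise_cons] at hpw
    obtain ⟨hx, hL⟩ := hpw
    rw [List.map_cons, List.sum_cons]
    have e1 : (L.map fun τ => if x < τ then a τ else 1) = L.map fun _ => (1:ℝ) :=
      List.map_congr_left fun τ hτ => if_neg (asymm (hx τ hτ))
    have e2 : (L.map fun w => if w < x then b w else 1) = L.map b :=
      List.map_congr_left fun w hw => if_pos (hx w hw)
    have hterm1 : ((x :: L).map fun τ => if x < τ then a τ else 1).prod * (a x - b x) *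
        ((x :: L).map fun w => if w < x then b w else 1).prod
        = (a x - b x) * (L.map b).prod := by
      rw [List.map_cons, List.map_cons, List.prod_cons, List.prod_cons, e1, e2,
        if_neg (lt_irrefl x), if_neg (lt_irrefl x)]
      simp
    have hterm2 : (L.map fun s =>
        ((x :: L).map fun τ => if s < τ then a τ else 1).prod * (a s - b s) *
          ((x :: L).map fun w => if w < s then b w else 1).prod).sum
        = a x * ((L.map a).prod - (L.map b).prod) := by
      rw [← ih hL, ← list_sum_map_mul_left]
      refine congrArg List.sum (List.map_congr_left fun s hs => ?_)
      rw [List.map_cons, List.prod_cons, if_pos (hx s hs), List.map_cons, List.prod_cons,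
        if_neg (asymm (hx s hs))]
      ring
    rw [hterm1, hterm2, List.map_cons, List.map_cons, List.prod_cons, List.prod_cons]
    ring

end Helpers2
/-- **Theorem (multiple robustness).** Along a path `Ξ ∈ Π_r`, if for each `s ∈ Ξ`,
`s ≠ 1_d` either the working selection odds `O†_s` or the working regression function
`μ†_s` is correctly specified, then the multiply-robust functional `𝓛†_Ξ` is unbiased
for the path-wise parameter `θ_Ξ`. -/
theorem multiple_robustness [∀ j, Nonempty (X j)]
    (𝓡 : Finset (Pat d)) (h𝓡 : allOnes d ∈ 𝓡)
    (PA : Pat d → Finset (Pat d)) (hG : IsRegularGraph 𝓡 PA)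
    (p : (∀ j, X j) → Pat d → ℝ)
    (hpmf : IsJointPMF 𝓡 p) (hpos : MargPos 𝓡 p)
    (hfact : SelOddsFactorizes 𝓡 PA p)
    (θ : (∀ j, X j) → ℝ)
    (r : Pat d) (hr : r ∈ 𝓡) (hr1 : r ≠ allOnes d)
    (Ξ : List (Pat d)) (hΞ : IsPath 𝓡 PA (allOnes d) r Ξ)
    (Od μd : Pat d → (∀ j, X j) → ℝ)
    (hOobs : ∀ s ∈ Ξ, s ≠ allOnes d → ∀ ℓ ℓ', agree s ℓ ℓ' → Od s ℓ = Od s ℓ')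
    (hμobs : ∀ s ∈ Ξ, s ≠ allOnes d → ∀ ℓ ℓ', agree s ℓ ℓ' → μd s ℓ = μd s ℓ')
    (hrobust : ∀ s ∈ Ξ, s ≠ allOnes d →
      (∀ ℓ, Od s ℓ = odds p PA s ℓ) ∨
      (∀ ℓ, μd s ℓ =
        (∑ ℓ' ∈ univ.filter (fun ℓ' => agree s ℓ ℓ'),
            θ ℓ' * p ℓ' (allOnes d) *
              (Ξ.map fun τ => if s < τ ∧ τ ≠ allOnes d then odds p PA τ ℓ' else 1).prod)
          / obsPA p s ℓ (PA s))) :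
    (∑ ℓ : ∀ j, X j, ∑ ρ ∈ 𝓡,
      (θ ℓ * (if ρ = allOnes d then (1:ℝ) else 0) *
          (Ξ.map fun s => if s = allOnes d then (1:ℝ) else Od s ℓ).prod
        + (Ξ.map fun s => if s = allOnes d then (0:ℝ) else
            μd s ℓ * ((if ρ = s then (1:ℝ) else 0)
              - Od s ℓ * (if ρ ∈ PA s then (1:ℝ) else 0)) *
              (Ξ.map fun w => if w < s then Od w ℓ else 1).prod).sum) * p ℓ ρ)
      = ∑ ℓ : ∀ j, X j, θ ℓ * p ℓ (allOnes d) *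
          (Ξ.map fun s => if s = allOnes d then (1:ℝ) else odds p PA s ℓ).prod := by
  obtain ⟨hne, hhead, hlast, hmem, hchain⟩ := hΞ
  have hnn := hpmf.1
  -- abbreviations
  set W : Pat d → (∀ j, X j) → ℝ :=
    fun s ℓ => (Ξ.map fun w => if w < s then Od w ℓ else 1).prod with hW
  set Pre : Pat d → (∀ j, X j) → ℝ :=
    fun s ℓ => (Ξ.map fun τ => if s < τ ∧ τ ≠ allOnes d then odds p PA τ ℓ else 1).prod
    with hPre
  -- structural facts about the path
  have hglt : Ξ.Chain' (fun a b => b < a) := chain_lt 𝓡 PA hG Ξ hmem hchain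
  have htr : IsTrans (Pat d) (fun a b => b < a) := ⟨fun _ _ _ h1 h2 => lt_trans h2 h1⟩
  have hpw : Ξ.Pairwise (fun a b => b < a) := List.isChain_iff_pairwise.mp hglt
  -- Step 1: compute the inner sum over ρ
  have step1 : ∀ ℓ : ∀ j, X j,
      (∑ ρ ∈ 𝓡,
        (θ ℓ * (if ρ = allOnes d then (1:ℝ) else 0) *
            (Ξ.map fun s => if s = allOnes d then (1:ℝ) else Od s ℓ).prod
          + (Ξ.map fun s => if s = allOnes d then (0:ℝ) else
              μd s ℓ * ((if ρ = s then (1:ℝ) else 0)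
                - Od s ℓ * (if ρ ∈ PA s then (1:ℝ) else 0)) * W s ℓ).sum) * p ℓ ρ)
      = θ ℓ * (Ξ.map fun s => if s = allOnes d then (1:ℝ) else Od s ℓ).prod
          * p ℓ (allOnes d)
        + (Ξ.map fun s => if s = allOnes d then (0:ℝ) else
            μd s ℓ * (p ℓ s - Od s ℓ * jointA p ℓ (PA s)) * W s ℓ).sum := by
    intro ℓ
    simp only [add_mul, Finset.sum_add_distrib]
    congr 1
    · have h1 : ∀ ρ ∈ 𝓡,
          θ ℓ * (if ρ = allOnes d then (1:ℝ) else 0) *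
            (Ξ.map fun s => if s = allOnes d then (1:ℝ) else Od s ℓ).prod * p ℓ ρ
          = if ρ = allOnes d then
              θ ℓ * (Ξ.map fun s => if s = allOnes d then (1:ℝ) else Od s ℓ).prod * p ℓ ρ
            else 0 := by
        intro ρ _
        by_cases hρ : ρ = allOnes d <;> simp [hρ]
      rw [Finset.sum_congr rfl h1, Finset.sum_ite_eq' 𝓡 (allOnes d), if_pos h𝓡]
    · rw [Finset.sum_congr rfl (fun ρ _ => list_sum_map_mul_right Ξ _ (p ℓ ρ)),
        list_sum_finset_sum]
      refine congrArg List.sum (List.map_congr_left fun s hs => ?_)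
      by_cases hs1 : s = allOnes d
      · simp [hs1]
      · simp only [if_neg hs1]
        have hsub : PA s ⊆ 𝓡 := (hG.2 s (hmem s hs) hs1).2.1
        have h2 : ∀ ρ ∈ 𝓡,
            μd s ℓ * ((if ρ = s then (1:ℝ) else 0)
              - Od s ℓ * (if ρ ∈ PA s then (1:ℝ) else 0)) * W s ℓ * p ℓ ρ
            = μd s ℓ * W s ℓ * (if ρ = s then p ℓ ρ else 0)
              - μd s ℓ * W s ℓ * Od s ℓ * (if ρ ∈ PA s then p ℓ ρ else 0) := by
          intro ρ _
          split_ifs <;> ring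
        rw [Finset.sum_congr rfl h2, Finset.sum_sub_distrib, ← Finset.mul_sum,
          ← Finset.mul_sum, Finset.sum_ite_eq' 𝓡 s, if_pos (hmem s hs),
          Finset.sum_ite_mem, Finset.inter_eq_right.mpr hsub]
        unfold jointA
        ring
  -- Step 2: per-pattern unbiasedness of the augmentation term
  have step2 : ∀ s ∈ Ξ, s ≠ allOnes d →
      (∑ ℓ : ∀ j, X j, μd s ℓ * (p ℓ s - Od s ℓ * jointA p ℓ (PA s)) * W s ℓ)
      = ∑ ℓ : ∀ j, X j, θ ℓ * p ℓ (allOnes d) *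
          (Pre s ℓ * ((odds p PA s ℓ - Od s ℓ) * W s ℓ)) := by
    intro s hsΞ hs1
    have hs𝓡 : s ∈ 𝓡 := hmem s hsΞ
    have hfs : ∀ ℓ, p ℓ s = jointA p ℓ (PA s) * odds p PA s ℓ := hfact s hs𝓡 hs1
    rcases hrobust s hsΞ hs1 with hO | hμ
    · trans (0:ℝ)
      · refine Finset.sum_eq_zero fun ℓ _ => ?_
        rw [hfs ℓ, hO ℓ]; ring
      · symm
        refine Finset.sum_eq_zero fun ℓ _ => ?_
        rw [hO ℓ]; ring
    · have hFm : ∀ ℓ ℓ', agree s ℓ ℓ' →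
          (odds p PA s ℓ - Od s ℓ) * W s ℓ = (odds p PA s ℓ' - Od s ℓ') * W s ℓ' := by
        intro ℓ ℓ' hag
        have hWs : W s ℓ = W s ℓ' := by
          refine congrArg List.prod (List.map_congr_left fun w hw => ?_)
          by_cases hws : w < s
          · rw [if_pos hws, if_pos hws]
            have hw1 : w ≠ allOnes d :=
              ne_of_lt (lt_of_lt_of_le hws (le_allOnes s))
            exact hOobs w hw hw1 ℓ ℓ' (agree_mono hws.le hag)
          · rw [if_neg hws, if_neg hws]
        rw [odds_congr p PA hag, hOobs s hsΞ hs1 ℓ ℓ' hag, hWs]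
      have hD : ∀ ℓ, 0 < obsPA p s ℓ (PA s) :=
        obsPA_pos p 𝓡 PA hG hnn hpos hs𝓡 hs1
      calc (∑ ℓ : ∀ j, X j, μd s ℓ * (p ℓ s - Od s ℓ * jointA p ℓ (PA s)) * W s ℓ)
          = ∑ ℓ : ∀ j, X j,
              (∑ ℓ' ∈ univ.filter (fun ℓ' => agree s ℓ ℓ'),
                θ ℓ' * p ℓ' (allOnes d) * Pre s ℓ') / obsPA p s ℓ (PA s) *
              (((odds p PA s ℓ - Od s ℓ) * W s ℓ) * jointA p ℓ (PA s)) := by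
            refine Finset.sum_congr rfl fun ℓ _ => ?_
            rw [hμ ℓ, hfs ℓ]
            ring
        _ = ∑ ℓ : ∀ j, X j,
              (θ ℓ * p ℓ (allOnes d) * Pre s ℓ) * ((odds p PA s ℓ - Od s ℓ) * W s ℓ) :=
            key_swap p s (PA s) _ _ hFm hD
        _ = ∑ ℓ : ∀ j, X j, θ ℓ * p ℓ (allOnes d) *
              (Pre s ℓ * ((odds p PA s ℓ - Od s ℓ) * W s ℓ)) := by
            refine Finset.sum_congr rfl fun ℓ _ => by ring
  -- assemble
  rw [Finset.sum_congr rfl fun ℓ _ => step1 ℓ, Finset.sum_add_distrib,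
    list_sum_finset_sum]
  have hmapeq : (Ξ.map fun s => ∑ ℓ : ∀ j, X j,
        if s = allOnes d then (0:ℝ)
        else μd s ℓ * (p ℓ s - Od s ℓ * jointA p ℓ (PA s)) * W s ℓ)
      = Ξ.map fun s => ∑ ℓ : ∀ j, X j, θ ℓ * p ℓ (allOnes d) *
          (if s = allOnes d then (0:ℝ)
           else Pre s ℓ * ((odds p PA s ℓ - Od s ℓ) * W s ℓ)) := by
    refine List.map_congr_left fun s hs => ?_
    by_cases hs1 : s = allOnes d
    · simp [hs1]
    · simp only [if_neg hs1]
      exact step2 s hs hs1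
  rw [hmapeq, ← list_sum_finset_sum, ← Finset.sum_add_distrib]
  refine Finset.sum_congr rfl fun ℓ _ => ?_
  rw [list_sum_map_mul_left]
  -- now pointwise telescoping
  -- decompose Ξ = allOnes :: t
  obtain ⟨x, t, rfl⟩ : ∃ x t, Ξ = x :: t := by
    cases Ξ with
    | nil => exact absurd rfl hne
    | cons x t => exact ⟨x, t, rfl⟩
  have hx : x = allOnes d := by simpa using hhead
  subst hx
  have hpc := List.pairwise_cons.mp hpw
  have ht1 : ∀ s ∈ t, s < allOnes d := fun s hs => hpc.1 s hs
  have htne : ∀ s ∈ t, s ≠ allOnes d := fun s hs => ne_of_lt (ht1 s hs)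
  have htpw : t.Pairwise (fun a b => b < a) := hpc.2
  have e1 : ((allOnes d :: t).map fun s =>
      if s = allOnes d then (1:ℝ) else Od s ℓ).prod = (t.map fun s => Od s ℓ).prod := by
    rw [List.map_cons, List.prod_cons, if_pos rfl, one_mul]
    exact congrArg List.prod (List.map_congr_left fun s hs => if_neg (htne s hs))
  have e2 : ((allOnes d :: t).map fun s =>
      if s = allOnes d then (1:ℝ) else odds p PA s ℓ).prod
      = (t.map fun s => odds p PA s ℓ).prod := by
    rw [List.map_cons, List.prod_cons, if_pos rfl, one_mul]
    exact congrArg List.prod (List.map_congr_left fun s hs => if_neg (htne s hs))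
  have e3 : ((allOnes d :: t).map fun s => if s = allOnes d then (0:ℝ) else
        Pre s ℓ * ((odds p PA s ℓ - Od s ℓ) * W s ℓ)).sum
      = (t.map fun s =>
          ((t.map fun τ => if s < τ then odds p PA τ ℓ else 1).prod)
            * (odds p PA s ℓ - Od s ℓ)
            * ((t.map fun w => if w < s then Od w ℓ else 1).prod)).sum := by
    rw [List.map_cons, List.sum_cons, if_pos rfl, zero_add]
    refine congrArg List.sum (List.map_congr_left fun s hs => ?_)
    rw [if_neg (htne s hs)]
    have hPres : Pre s ℓ = (t.map fun τ => if s < τ then odds p PA τ ℓ else 1).prod := by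
      simp only [hPre]
      rw [List.map_cons, List.prod_cons, if_neg (by simp), one_mul]
      exact congrArg List.prod (List.map_congr_left fun τ hτ => by
        simp [htne τ hτ])
    have hWs : W s ℓ = (t.map fun w => if w < s then Od w ℓ else 1).prod := by
      simp only [hW]
      rw [List.map_cons, List.prod_cons, if_neg (asymm (ht1 s hs)), one_mul]
    rw [hPres, hWs]
    ring
  rw [e1, e2, e3]
  have htel := telescope (fun τ => odds p PA τ ℓ) (fun τ => Od τ ℓ) t htpw
  rw [htel]
  ring
end
end

section
/- Let 𝓡 be a pattern set with a regular pattern graph G, let p be a joint pmf with p(ℓ, r) > 0 for every ℓ and every r ∈ 𝓡 (full positivity), fix r ∈ 𝓡 with r ≠ 1_d, and let g be a real-valued function of ℓ depending only on the coordinates j with r j = false (the entries unobserved under r). Then the following are equivalent: (i) p(ℓ, r) = p(ℓ, PA(r)) · O_r(ℓ) · g(ℓ) for every ℓ (the selection odds of r against its parents equal the observed odds times the tilt g); (ii) p(ℓ, r) · p_r(ℓ, PA(r)) = p(ℓ, PA(r)) · p_r(ℓ, r) · g(ℓ) for every ℓ (the extrapolation distribution of pattern r equals that of R ∈ PA(r)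 times the tilt g). -/
open Finset

noncomputable section

variable {d : ℕ}


variable {X : Fin d → Type*} [∀ j, Fintype (X j)] [∀ j, DecidableEq (X j)]

/-- **Theorem (sensitivity analysis / exponential tilting).** For a tilt `g` depending
only on the entries unobserved under `r`, perturbing the selection odds of `r` by `g`
is equivalent to perturbing the extrapolation distribution of `r` by `g`. -/
theorem tilted_selection_odds_iff_tilted_extrapolation [∀ j, Nonempty (X j)]
    (𝓡 : Finset (Pat d)) (h𝓡 : allOnes d ∈ 𝓡)
    (PA : Pat d → Finset (Pat d)) (hG : IsRegularGraph 𝓡 PA)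
    (p : (∀ j, X j) → Pat d → ℝ)
    (hpmf : IsJointPMF 𝓡 p) (hpos : FullPos 𝓡 p)
    (r : Pat d) (hr : r ∈ 𝓡) (hr1 : r ≠ allOnes d)
    (g : (∀ j, X j) → ℝ)
    (hg : ∀ ℓ ℓ', (∀ j, r j = false → ℓ j = ℓ' j) → g ℓ = g ℓ') :
    (∀ ℓ, p ℓ r = jointA p ℓ (PA r) * (odds p PA r ℓ * g ℓ)) ↔
    (∀ ℓ, p ℓ r * obsPA p r ℓ (PA r) = jointA p ℓ (PA r) * (obsP p r ℓ r * g ℓ)) := by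
  have hPA := hG.2 r hr hr1
  have hposA : ∀ ℓ, 0 < obsPA p r ℓ (PA r) := by
    intro ℓ
    apply Finset.sum_pos _ hPA.1
    intro s hs
    apply Finset.sum_pos
    · intro ℓ' _
      exact hpos ℓ' s (hPA.2.1 hs)
    · exact ⟨ℓ, Finset.mem_filter.mpr ⟨Finset.mem_univ _, fun _ _ => rfl⟩⟩
  constructor
  · intro h ℓ
    have hne := (hposA ℓ).ne'
    rw [h ℓ, odds]
    field_simp
  · intro h ℓ
    have hne := (hposA ℓ).ne'
    have := h ℓ
    rw [odds]
    field_simp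
    linarith [h ℓ]
end
end

section
/- Let G be an acyclic pattern graph on a pattern set 𝓡 and let p be a joint pmf with full positivity (p(ℓ, r) > 0 for every ℓ and every r ∈ 𝓡). Then: (1) the selection odds model of p factorizes with respect to G if and only if the pattern mixture model of p factorizes with respect to G; and (2) if p and p' are two joint pmfs with full positivity whose pattern mixture models both factorize with respect to G and which induce the same observed-data distribution (p_r(ℓ, r) = p'_r(ℓ, r) for every ℓ and every r ∈ 𝓡), then p = p'. -/
open Finset

noncomputable section

variable {d : ℕ}


variable {X : Fin d → Type*} [∀ j, Fintype (X j)] [∀ j, DecidableEq (X j)]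

/-- An acyclic pattern graph on `𝓡`: `1_d` is the unique source (it has no parents, every
other pattern has a nonempty parent set inside `𝓡`), and the arrow relation `s ∈ PA(r)`
admits no directed cycle. -/
def IsAcyclicGraph (𝓡 : Finset (Pat d)) (PA : Pat d → Finset (Pat d)) : Prop :=
  PA (allOnes d) = ∅ ∧
    (∀ r ∈ 𝓡, r ≠ allOnes d → (PA r).Nonempty ∧ PA r ⊆ 𝓡) ∧
    ∀ v : Pat d, ¬ Relation.TransGen (fun s t => t ∈ 𝓡 ∧ s ∈ PA t) v v

lemma obsP_pos_of_fullPos {𝓡 : Finset (Pat d)} {p : (∀ j, X j) → Pat d → ℝ}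
    (hpos : FullPos 𝓡 p) {s : Pat d} (hs : s ∈ 𝓡) (r : Pat d) (ℓ : ∀ j, X j) :
    0 < obsP p r ℓ s := by
  apply Finset.sum_pos
  · intro ℓ' _; exact hpos ℓ' s hs
  · exact ⟨ℓ, Finset.mem_filter.mpr ⟨Finset.mem_univ _, fun _ _ => rfl⟩⟩

lemma obsP_allOnes (p : (∀ j, X j) → Pat d → ℝ) (m : ∀ j, X j) (s : Pat d) :
    obsP p (allOnes d) m s = p m s := by
  unfold obsP
  have h : univ.filter (fun ℓ' => agree (allOnes d) m ℓ') = {m} := by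
    ext ℓ'
    simp [agree, allOnes, funext_iff, eq_comm]
  rw [h, Finset.sum_singleton]

/-- **Theorem (acyclic pattern graphs).** For an acyclic pattern graph and joint pmfs with
full positivity: (1) the selection odds model factorizes iff the pattern mixture model
factorizes; (2) pattern-mixture factorization identifies the full-data distribution from
the observed-data distribution. -/
theorem acyclic_pattern_graph_equivalence_and_identification [∀ j, Nonempty (X j)]
    (𝓡 : Finset (Pat d)) (h𝓡 : allOnes d ∈ 𝓡)
    (PA : Pat d → Finset (Pat d)) (hG : IsAcyclicGraph 𝓡 PA)
    (p p' : (∀ j, X j) → Pat d → ℝ)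
    (hpmf : IsJointPMF 𝓡 p) (hpmf' : IsJointPMF 𝓡 p')
    (hpos : FullPos 𝓡 p) (hpos' : FullPos 𝓡 p') :
    (SelOddsFactorizes 𝓡 PA p ↔ PMMFactorizes 𝓡 PA p) ∧
    (PMMFactorizes 𝓡 PA p → PMMFactorizes 𝓡 PA p' →
      (∀ r ∈ 𝓡, ∀ ℓ, obsP p r ℓ r = obsP p' r ℓ r) →
      ∀ ℓ, ∀ r ∈ 𝓡, p ℓ r = p' ℓ r) := by
  obtain ⟨hPA1, hPAne, hacyc⟩ := hG
  have hden : ∀ q : (∀ j, X j) → Pat d → ℝ, FullPos 𝓡 q → ∀ r ∈ 𝓡, r ≠ allOnes d →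
      ∀ ℓ, 0 < obsPA q r ℓ (PA r) := by
    intro q hq r hr hne ℓ
    obtain ⟨hne', hsub⟩ := hPAne r hr hne
    exact Finset.sum_pos (fun s hs => obsP_pos_of_fullPos hq (hsub hs) r ℓ) hne'
  constructor
  · constructor
    · intro h r hr hne ℓ
      have hd := (hden p hpos r hr hne ℓ).ne'
      rw [h r hr hne ℓ]
      unfold odds
      rw [mul_assoc, div_mul_cancel₀ _ hd]
    · intro h r hr hne ℓ
      have hd := (hden p hpos r hr hne ℓ).ne'
      unfold odds
      rw [← mul_div_assoc, eq_div_iff hd]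
      exact h r hr hne ℓ
  · intro hP hP' hobs
    have wf : WellFounded (fun s t : Pat d => t ∈ 𝓡 ∧ s ∈ PA t) := by
      have hirr : IsIrrefl (Pat d)
          (Relation.TransGen (fun s t : Pat d => t ∈ 𝓡 ∧ s ∈ PA t)) := ⟨hacyc⟩
      have htr : IsTrans (Pat d)
          (Relation.TransGen (fun s t : Pat d => t ∈ 𝓡 ∧ s ∈ PA t)) :=
        ⟨fun _ _ _ => Relation.TransGen.trans⟩
      have hwf : WellFounded
          (Relation.TransGen (fun s t : Pat d => t ∈ 𝓡 ∧ s ∈ PA t)) :=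
        @Finite.wellFounded_of_trans_of_irrefl _ _ _ htr hirr
      have hsub : Subrelation (fun s t : Pat d => t ∈ 𝓡 ∧ s ∈ PA t)
          (Relation.TransGen (fun s t : Pat d => t ∈ 𝓡 ∧ s ∈ PA t)) :=
        fun h => Relation.TransGen.single h
      exact Subrelation.wf hsub hwf
    have key : ∀ r, r ∈ 𝓡 → ∀ ℓ, p ℓ r = p' ℓ r := by
      intro r
      induction r using wf.induction with
      | _ r IH =>
        intro hr ℓ
        by_cases hne : r = allOnes d
        · subst hne
          have := hobs (allOnes d) h𝓡 ℓ
          rwa [obsP_allOnes, obsP_allOnes] at this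
        · obtain ⟨hnone, hsub⟩ := hPAne r hr hne
          have IHp : ∀ s ∈ PA r, ∀ m, p m s = p' m s :=
            fun s hs m => IH s ⟨hr, hs⟩ (hsub hs) m
          have eJ : jointA p ℓ (PA r) = jointA p' ℓ (PA r) :=
            Finset.sum_congr rfl (fun s hs => IHp s hs ℓ)
          have eC : obsPA p r ℓ (PA r) = obsPA p' r ℓ (PA r) := by
            unfold obsPA obsP
            exact Finset.sum_congr rfl (fun s hs =>
              Finset.sum_congr rfl (fun m _ => IHp s hs m))
          have eB : obsP p r ℓ r = obsP p' r ℓ r := hobs r hr ℓ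
          have h1 := hP r hr hne ℓ
          have h2 := hP' r hr hne ℓ
          have hC : obsPA p' r ℓ (PA r) ≠ 0 := (hden p' hpos' r hr hne ℓ).ne'
          rw [eJ, eC, eB] at h1
          exact mul_right_cancel₀ hC (h1.trans h2.symm)
    intro ℓ r hr
    exact key r hr ℓ
end
end

section
/- Let 𝓡 be a pattern set containing 1_d and let p be a joint pmf with p(ℓ, 1_d) > 0 for every ℓ; set Q_r(ℓ) = p(ℓ, r)/p(ℓ, 1_d). Then the following two sets of functions coincide: (a) the set of observable functions w with Σ_{r ∈ 𝓡} w(ℓ, r) · p(ℓ, r) = 0 for every ℓ (conditional mean zero given L); and (b) the set of functions of the form (ℓ, ρ) ↦ Σ_{r ∈ 𝓡, r ≠ 1_d} (1{ρ = r} − Q_r(ℓ) · 1{ρ = 1_d}) · h(ℓ, r), where h ranges over all observable functions. -/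
open Finset

noncomputable section

variable {d : ℕ}


variable {X : Fin d → Type*} [∀ j, Fintype (X j)] [∀ j, DecidableEq (X j)]

/-- A function of `(ℓ, r)` is observable on `𝓡` if, for each pattern `r ∈ 𝓡`, it depends
on `ℓ` only through the coordinates observed under `r`. -/
def Observable (𝓡 : Finset (Pat d)) {X : Fin d → Type*}
    (w : (∀ j, X j) → Pat d → ℝ) : Prop :=
  ∀ r ∈ 𝓡, ∀ ℓ ℓ', agree r ℓ ℓ' → w ℓ r = w ℓ' r

/-- **Lemma (augmentation space).** The space of observable functions with conditional mean
zero given `L` coincides with the space of functions of the form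
`(ℓ, ρ) ↦ Σ_{r ≠ 1_d} (1{ρ = r} − Q_r(ℓ)·1{ρ = 1_d})·h(ℓ, r)` with `h` observable. -/
theorem augmentation_space_ccmv [∀ j, Nonempty (X j)]
    (𝓡 : Finset (Pat d)) (h𝓡 : allOnes d ∈ 𝓡)
    (p : (∀ j, X j) → Pat d → ℝ)
    (hpmf : IsJointPMF 𝓡 p)
    (hpos : ∀ ℓ, 0 < p ℓ (allOnes d)) :
    ∀ w : (∀ j, X j) → Pat d → ℝ,
      (Observable 𝓡 w ∧ ∀ ℓ, ∑ r ∈ 𝓡, w ℓ r * p ℓ r = 0) ↔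
      (∃ h : (∀ j, X j) → Pat d → ℝ, Observable 𝓡 h ∧
        ∀ ℓ, ∀ ρ ∈ 𝓡, w ℓ ρ =
          ∑ r ∈ 𝓡.erase (allOnes d),
            ((if ρ = r then (1:ℝ) else 0)
              - (p ℓ r / p ℓ (allOnes d)) * (if ρ = allOnes d then (1:ℝ) else 0))
              * h ℓ r) := by
  intro w
  constructor
  · rintro ⟨hobs, hmean⟩
    refine ⟨w, hobs, ?_⟩
    intro ℓ ρ hρ
    have hp1 : p ℓ (allOnes d) ≠ 0 := (hpos ℓ).ne'
    by_cases hρ1 : ρ = allOnes d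
    · subst hρ1
      have key : ∑ r ∈ 𝓡.erase (allOnes d), w ℓ r * p ℓ r
          = - (w ℓ (allOnes d) * p ℓ (allOnes d)) := by
        have h1 := hmean ℓ
        have h2 := Finset.add_sum_erase 𝓡 (fun r => w ℓ r * p ℓ r) h𝓡
        linarith
      have step : ∑ r ∈ 𝓡.erase (allOnes d),
            ((if allOnes d = r then (1:ℝ) else 0)
              - (p ℓ r / p ℓ (allOnes d)) * (if allOnes d = allOnes d then (1:ℝ) else 0))
              * w ℓ r
          = (∑ r ∈ 𝓡.erase (allOnes d), w ℓ r * p ℓ r) * (-(1 / p ℓ (allOnes d))) := by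
        rw [Finset.sum_mul]
        apply Finset.sum_congr rfl
        intro r hr
        have hne : allOnes d ≠ r := fun h => (Finset.mem_erase.mp hr).1 h.symm
        simp only [if_neg hne, if_pos rfl, if_true]
        ring
      rw [step, key]
      field_simp
    · rw [Finset.sum_eq_single ρ]
      · simp [hρ1]
      · intro r hr hne
        simp [Ne.symm hne, hρ1]
      · intro hc
        exact absurd (Finset.mem_erase.mpr ⟨hρ1, hρ⟩) hc
  · rintro ⟨h, hhobs, hw⟩
    have hval : ∀ ρ ∈ 𝓡, ρ ≠ allOnes d → ∀ ℓ, w ℓ ρ = h ℓ ρ := by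
      intro ρ hρ hρ1 ℓ
      rw [hw ℓ ρ hρ, Finset.sum_eq_single ρ]
      · simp [hρ1]
      · intro r hr hne
        simp [Ne.symm hne, hρ1]
      · intro hc
        exact absurd (Finset.mem_erase.mpr ⟨hρ1, hρ⟩) hc
    constructor
    · intro r hr ℓ ℓ' hag
      by_cases hr1 : r = allOnes d
      · subst hr1
        have : ℓ = ℓ' := funext fun j => hag j rfl
        rw [this]
      · rw [hval r hr hr1 ℓ, hval r hr hr1 ℓ']
        exact hhobs r hr ℓ ℓ' hag
    · intro ℓ
      have hp1 : p ℓ (allOnes d) ≠ 0 := (hpos ℓ).ne'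
      calc ∑ ρ ∈ 𝓡, w ℓ ρ * p ℓ ρ
          = ∑ ρ ∈ 𝓡, ∑ r ∈ 𝓡.erase (allOnes d),
              (((if ρ = r then (1:ℝ) else 0)
                - (p ℓ r / p ℓ (allOnes d)) * (if ρ = allOnes d then (1:ℝ) else 0))
                * h ℓ r) * p ℓ ρ := by
            apply Finset.sum_congr rfl
            intro ρ hρ
            rw [hw ℓ ρ hρ, Finset.sum_mul]
        _ = ∑ r ∈ 𝓡.erase (allOnes d), ∑ ρ ∈ 𝓡,
              (((if ρ = r then (1:ℝ) else 0)
                - (p ℓ r / p ℓ (allOnes d)) * (if ρ = allOnes d then (1:ℝ) else 0))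
                * h ℓ r) * p ℓ ρ := Finset.sum_comm
        _ = 0 := by
            apply Finset.sum_eq_zero
            intro r hr
            obtain ⟨hr1, hrR⟩ := Finset.mem_erase.mp hr
            have expand : ∀ ρ,
                (((if ρ = r then (1:ℝ) else 0)
                  - (p ℓ r / p ℓ (allOnes d)) * (if ρ = allOnes d then (1:ℝ) else 0))
                  * h ℓ r) * p ℓ ρ
                = (if ρ = r then h ℓ r * p ℓ ρ else 0)
                  - (if ρ = allOnes d then (p ℓ r / p ℓ (allOnes d)) * h ℓ r * p ℓ ρ else 0) := by
              intro ρ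
              have hr1' : allOnes d ≠ r := Ne.symm hr1
              by_cases h1 : ρ = r <;> by_cases h2 : ρ = allOnes d <;>
                simp [h1, h2, hr1, hr1'] <;> ring
            rw [Finset.sum_congr rfl (fun ρ _ => expand ρ), Finset.sum_sub_distrib,
              Finset.sum_ite_eq' 𝓡 r (fun ρ => h ℓ r * p ℓ ρ),
              Finset.sum_ite_eq' 𝓡 (allOnes d)
                (fun ρ => (p ℓ r / p ℓ (allOnes d)) * h ℓ r * p ℓ ρ)]
            rw [if_pos hrR, if_pos h𝓡]
            field_simp
            ring
end
end
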